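/- Let F be a field of characteristic two, L/F a field extension of finite degree, and C ⊆ Lⁿ an L-linear code with C ⊆ C^⊥, where the orthogonal is taken with respect to the standard inner product (x,y) ↦ Σ xᵢyᵢ on Lⁿ. Then the all-ones vector (1,1,...,1) lies in C^⊥, and consequently d₁(C^⊥) ≤ 1. In particular, there are no self-dual MRD codes in Lⁿ when char F = 2. -/
import Mathlib


/-- In characteristic two, if `C ⊆ C^⊥` then the all-ones vector lies in `C^⊥`, hence
`d₁(C^⊥) ≤ 1`; in particular there are no self-dual MRD codes. -/
theorem stmt_6 (F L : Type*) [Field F] [Field L] [Algebra F L] [FiniteDimensional F L]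
    [CharP F 2] (n : ℕ) (hn : 0 < n) (C : Submodule L (Fin n → L))
    (hC : ∀ x ∈ C, ∀ y ∈ C, ∑ i, x i * y i = 0) :
    (∀ y ∈ C, ∑ i, (1 : L) * y i = 0) ∧
    (∃ c : Fin n → L, (∀ y ∈ C, ∑ i, c i * y i = 0) ∧ c ≠ 0 ∧
      Module.finrank F (Submodule.span F (Set.range c)) ≤ 1) ∧
    ((∀ x, x ∈ C ↔ ∀ y ∈ C, ∑ i, x i * y i = 0) →
      ¬ (∀ c ∈ C, c ≠ 0 →
        n / 2 + 1 ≤ Module.finrank F (Submodule.span F (Set.range c)))) := by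
  haveI : CharP L 2 := charP_of_injective_algebraMap (algebraMap F L).injective 2
  have h1 : ∀ y ∈ C, ∑ i, (1 : L) * y i = 0 := by
    intro y hy
    have hsq : (∑ i, y i) ^ 2 = 0 := by
      rw [sum_pow_char]
      have := hC y hy y hy
      simpa [pow_two] using this
    have : (∑ i, y i) = 0 := by
      exact pow_eq_zero_iff (n := 2) (by norm_num) |>.mp hsq
    simpa using this
  refine ⟨h1, ?_, ?_⟩
  · refine ⟨fun _ => 1, fun y hy => by simpa using h1 y hy, ?_, ?_⟩
    · intro h
      have := congrFun h ⟨0, hn⟩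
      simp at this
    · have hr : Set.range (fun _ : Fin n => (1:L)) = ({(1:L)} : Set L) := by
        haveI : Nonempty (Fin n) := ⟨⟨0, hn⟩⟩
        simp [Set.range_const]
      rw [hr]
      exact (finrank_span_singleton (one_ne_zero)).le
  · intro hself hall
    have hone : (fun _ : Fin n => (1:L)) ∈ C := by
      rw [hself]
      intro y hy
      simpa using h1 y hy
    have hne : (fun _ : Fin n => (1:L)) ≠ 0 := by
      intro h
      have := congrFun h ⟨0, hn⟩
      simp at this
    have hle := hall _ hone hne
    have hr : Set.range (fun _ : Fin n => (1:L)) = ({(1:L)} : Set L) := by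
      haveI : Nonempty (Fin n) := ⟨⟨0, hn⟩⟩
      simp [Set.range_const]
    rw [hr, finrank_span_singleton (one_ne_zero : (1:L) ≠ 0)] at hle
    have hn1 : n = 1 := by omega
    subst hn1
    have := hC _ hone _ hone
    simp at this
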